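/- Let p = 2, A a perfect F_2-algebra, and G the A-group scheme with underlying scheme G_a × G_a and group law (t₁,u₁)+(t₂,u₂) = (t₁+t₂+u₁u₂, u₁+u₂) (Witt vectors of length 2). A pair (f₀,f₁) ∈ A[T,U]² defines a group-scheme endomorphism of G if and only if there exist additive polynomials a(U) = Σ_r a_r U^{2^r} and b(U) such that f₁(T,U) = a(U) and f₀(T,U) = Σ_r a_r² T^{2^r} + Σ_{r₁>r₂≥0} a_{r₁} a_{r₂} U^{2^{r₁}+2^{r₂}} + b(U). -/

import Mathlib

open MvPolynomial

set_option maxHeartbeats 1000000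

namespace WittTwoAux

variable {A : Type*} [CommRing A] [CharP A 2]

omit [CharP A 2] in
lemma aeval_aeval {n : ℕ} {B : Type*} [CommRing B] [Algebra A B]
    (w : Fin n → B) (P Q : MvPolynomial (Fin n) A) (f : MvPolynomial (Fin 2) A) :
    aeval w (aeval ![P, Q] f) = aeval ![aeval w P, aeval w Q] f := by
  rw [comp_aeval_apply]
  have h : (fun i => aeval w (![P, Q] i)) = ![aeval w P, aeval w Q] := by
    funext i; fin_cases i <;> simp
  rw [h]

omit [CharP A 2] in
lemma pe_aeval {B : Type*} [CommRing B] [Algebra A B]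
    (w : Fin 2 → B) (t : MvPolynomial (Fin 2) A) (q : Polynomial A) :
    aeval w (Polynomial.aeval t q) = Polynomial.aeval (aeval w t) q :=
  (Polynomial.aeval_algHom_apply (aeval w : MvPolynomial (Fin 2) A →ₐ[A] B) t q).symm

omit [CharP A 2] in
lemma pe_of_aeval {B : Type*} [CommRing B] [Algebra A B]
    (t : B) (F : MvPolynomial (Fin 2) A) :
    Polynomial.aeval t (aeval ![(0 : Polynomial A), Polynomial.X] F) = aeval ![0, t] F := by
  rw [comp_aeval_apply]
  have h : (fun i => Polynomial.aeval t ((![(0 : Polynomial A), Polynomial.X]) i)) = ![0, t] := by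
    funext i; fin_cases i <;> simp
  rw [h]

lemma hasse_map {R S : Type*} [Semiring R] [Semiring S] (f : R →+* S) (q : Polynomial R) (k : ℕ) :
    Polynomial.hasseDeriv k (q.map f) = (Polynomial.hasseDeriv k q).map f := by
  ext n
  simp [Polynomial.hasseDeriv_coeff, Polynomial.coeff_map]

omit [CharP A 2] in
lemma e1' (q : Polynomial A) :
    Polynomial.aeval (Polynomial.X : Polynomial (Polynomial A)) q = q.map Polynomial.C := by
  induction q using Polynomial.induction_on' with
  | add p r hp hr => simp [hp, hr]
  | monomial n a =>
      simp [Polynomial.aeval_monomial, Polynomial.map_monomial, Polynomial.algebraMap_apply,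
        ← Polynomial.C_mul_X_pow_eq_monomial]

omit [CharP A 2] in
lemma e2 (q : Polynomial A) :
    Polynomial.aeval (Polynomial.C Polynomial.X : Polynomial (Polynomial A)) q
      = Polynomial.C q := by
  induction q using Polynomial.induction_on' with
  | add p r hp hr => simp [hp, hr]
  | monomial n a =>
      rw [← Polynomial.C_mul_X_pow_eq_monomial, map_mul, map_pow, Polynomial.aeval_X,
        Polynomial.aeval_C, Polynomial.algebraMap_apply, ← map_pow, ← map_mul]
      simp [Polynomial.algebraMap_eq]

omit [CharP A 2] in
lemma e3 (q : Polynomial A) :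
    Polynomial.aeval (Polynomial.X + Polynomial.C Polynomial.X : Polynomial (Polynomial A)) q
      = Polynomial.taylor Polynomial.X (q.map Polynomial.C) := by
  rw [Polynomial.taylor_apply]
  show _ = Polynomial.eval₂ Polynomial.C _ _
  rw [Polynomial.eval₂_map, Polynomial.aeval_def]
  congr 1

lemma odd_choose_aux (n : ℕ) (h2 : 2 ≤ n) (hnp : ∀ r : ℕ, n ≠ 2 ^ r) :
    ∃ i, 0 < i ∧ i < n ∧ Nat.choose n i % 2 = 1 := by
  set s := Nat.log 2 n with hs
  have hile : 2 ^ s ≤ n := Nat.pow_log_le_self 2 (by omega)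
  have hlt : n < 2 ^ (s + 1) := Nat.lt_pow_succ_log_self (by norm_num) n
  have hne : 2 ^ s ≠ n := fun h => hnp s h.symm
  have hin : 2 ^ s < n := lt_of_le_of_ne hile hne
  refine ⟨2 ^ s, Nat.pow_pos (by norm_num), hin, ?_⟩
  have hm : n - 2 ^ s < 2 ^ s := by
    have : 2 ^ (s + 1) = 2 ^ s + 2 ^ s := by ring
    omega
  have hcast : ((Nat.choose n (2 ^ s) : ℕ) : ZMod 2) = 1 := by
    have hn' : n = 2 ^ s + (n - 2 ^ s) := by omega
    rw [hn', Nat.add_choose_eq]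
    push_cast
    rw [Finset.sum_eq_single (2 ^ s, 0)]
    · simp
    · rintro ⟨x, y⟩ hxy hne2
      rw [Finset.HasAntidiagonal.mem_antidiagonal] at hxy
      simp only [ne_eq, Prod.mk.injEq, not_and] at hne2
      simp only [] at hxy ⊢
      by_cases hx2 : x = 2 ^ s
      · exact absurd (show y = 0 by omega) (hne2 hx2)
      · rcases Nat.eq_zero_or_pos x with rfl | hx0
        · have h0 : Nat.choose (n - 2 ^ s) y = 0 := Nat.choose_eq_zero_of_lt (by omega)
          simp [h0]
        · obtain ⟨t, ht⟩ : 2 ∣ Nat.choose (2 ^ s) x :=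
            Nat.Prime.dvd_choose_pow Nat.prime_two (by omega) hx2
          rw [ht]
          push_cast
          rw [show (2 : ZMod 2) = 0 from by decide]
          ring
    · intro h
      exact absurd (by simp [Finset.HasAntidiagonal.mem_antidiagonal]) h
  have hnd : ¬ (2 ∣ Nat.choose n (2 ^ s)) := by
    intro hd
    rw [(ZMod.natCast_eq_zero_iff _ _).mpr hd] at hcast
    exact zero_ne_one hcast
  omega

theorem additive_classify (q : Polynomial A)
    (hq : Polynomial.aeval ((X 0 : MvPolynomial (Fin 2) A) + X 1) q
        = Polynomial.aeval (X 0 : MvPolynomial (Fin 2) A) q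
          + Polynomial.aeval (X 1 : MvPolynomial (Fin 2) A) q)
    (n : ℕ) (hn : ∀ r : ℕ, n ≠ 2 ^ r) : q.coeff n = 0 := by
  have h0 : q.coeff 0 = 0 := by
    have h := congrArg (aeval (fun _ => (0 : A))) hq
    rw [map_add, pe_aeval, pe_aeval, pe_aeval] at h
    simp only [map_add, aeval_X] at h
    have h' : Polynomial.aeval (0 : A) q = 0 := by
      have h2 := h
      rw [add_zero] at h2
      exact (add_eq_right.mp h2.symm)
    have he : Polynomial.eval 0 q = 0 := by
      rw [← Polynomial.coe_aeval_eq_eval]; exact h'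
    rw [Polynomial.coeff_zero_eq_eval_zero]; exact he
  have key : ∀ m : ℕ, 1 ≤ m → Polynomial.hasseDeriv m q = Polynomial.C (q.coeff m) := by
    intro m hm
    have h := congrArg (aeval (![Polynomial.X, Polynomial.C Polynomial.X] :
      Fin 2 → Polynomial (Polynomial A))) hq
    rw [map_add, pe_aeval, pe_aeval, pe_aeval] at h
    simp only [map_add, aeval_X, Matrix.cons_val_zero, Matrix.cons_val_one, Matrix.head_cons] at h
    rw [e1', e2, e3] at h
    have hc := congrArg (fun p => Polynomial.coeff p m) h
    simp only [Polynomial.taylor_coeff, Polynomial.coeff_add, Polynomial.coeff_map,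
      Polynomial.coeff_C] at hc
    rw [if_neg (by omega), add_zero, hasse_map, Polynomial.eval_map,
      Polynomial.eval₂_C_X] at hc
    exact hc
  rcases Nat.lt_or_ge n 2 with hsm | hlg
  · interval_cases n
    · exact h0
    · exact absurd rfl (hn 0)
  · obtain ⟨i, hi0, hin, hodd⟩ := odd_choose_aux n hlg hn
    have hc := congrArg (fun p => Polynomial.coeff p (n - i)) (key i hi0)
    simp only [Polynomial.hasseDeriv_coeff, Polynomial.coeff_C] at hc
    rw [if_neg (by omega), Nat.sub_add_cancel hin.le] at hc
    have hone : ((Nat.choose n i : ℕ) : A) = 1 := by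
      obtain ⟨t, ht⟩ : ∃ t, Nat.choose n i = 2 * t + 1 := ⟨Nat.choose n i / 2, by omega⟩
      rw [ht]
      push_cast
      rw [show ((2 : A)) = 0 from by
        have := CharP.cast_eq_zero A 2
        simpa using this]
      ring
    rw [hone, one_mul] at hc
    exact hc

omit [CharP A 2] in
theorem additive_form (q : Polynomial A)
    (h0 : ∀ n, (∀ r : ℕ, n ≠ 2 ^ r) → q.coeff n = 0)
    (N : ℕ) (hN : q.natDegree < N) :
    q = ∑ r ∈ Finset.range N, Polynomial.C (q.coeff (2 ^ r)) * Polynomial.X ^ (2 ^ r) := by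
  ext n
  rw [Polynomial.finset_sum_coeff]
  simp only [Polynomial.coeff_C_mul, Polynomial.coeff_X_pow]
  by_cases hpow : ∃ r : ℕ, n = 2 ^ r
  · obtain ⟨r0, rfl⟩ := hpow
    by_cases hr : r0 < N
    · rw [Finset.sum_eq_single r0]
      · simp
      · intro r _ hne
        rw [if_neg (fun hh => hne (Nat.pow_right_injective (le_refl 2) hh).symm), mul_zero]
      · intro h; exact absurd (Finset.mem_range.mpr hr) h
    · rw [Finset.sum_eq_zero, Polynomial.coeff_eq_zero_of_natDegree_lt]
      · calc q.natDegree < N := hN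
          _ ≤ r0 := by omega
          _ < 2 ^ r0 := Nat.lt_two_pow_self
      · intro r hrm
        rw [if_neg, mul_zero]
        intro hh
        have := Nat.pow_right_injective (le_refl 2) hh
        rw [Finset.mem_range] at hrm
        omega
  · push_neg at hpow
    rw [h0 n hpow, Finset.sum_eq_zero]
    intro r _
    rw [if_neg (hpow r), mul_zero]

theorem hom_shape (F : MvPolynomial (Fin 2) A)
    (hF : aeval ![(X 0 : MvPolynomial (Fin 4) A) + X 2 + X 1 * X 3, X 1 + X 3] F
        = aeval ![(X 0 : MvPolynomial (Fin 4) A), X 1] F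
          + aeval ![(X 2 : MvPolynomial (Fin 4) A), X 3] F) :
    ∃ (n₀ : ℕ) (c : ℕ → A), (∀ r, n₀ ≤ r → c r = 0) ∧
      F = ∑ r ∈ Finset.range n₀, C (c r) * X 1 ^ 2 ^ r := by
  have idv : aeval ![(X 0 : MvPolynomial (Fin 2) A), X 1] F = F := by
    have h : (![(X 0 : MvPolynomial (Fin 2) A), X 1]) = X := by
      funext i; fin_cases i <;> rfl
    rw [h, aeval_X_left_apply]
  have h1 := congrArg (aeval (![0, X 1, X 0, 0] : Fin 4 → MvPolynomial (Fin 2) A)) hF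
  rw [map_add, aeval_aeval, aeval_aeval, aeval_aeval] at h1
  simp only [map_add, map_mul, aeval_X, Matrix.cons_val_zero, Matrix.cons_val_one,
    Matrix.head_cons, Matrix.cons_val_two, Matrix.tail_cons, Matrix.cons_val_three,
    zero_add, add_zero, mul_zero, zero_mul, map_zero] at h1
  rw [idv] at h1
  have h2 := congrArg (aeval (![0, Polynomial.X, 0, Polynomial.X] : Fin 4 → Polynomial A)) hF
  rw [map_add, aeval_aeval, aeval_aeval, aeval_aeval] at h2
  simp only [map_add, map_mul, aeval_X, Matrix.cons_val_zero, Matrix.cons_val_one,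
    Matrix.head_cons, Matrix.cons_val_two, Matrix.tail_cons, Matrix.cons_val_three,
    zero_add, add_zero, mul_zero, zero_mul, map_zero,
    CharTwo.add_self_eq_zero] at h2
  have hp0 : aeval ![(Polynomial.X : Polynomial A), 0] F = 0 := by
    apply Polynomial.expand_injective (R := A) two_pos
    rw [map_zero, comp_aeval_apply]
    have hv : (fun i => Polynomial.expand A 2 ((![(Polynomial.X : Polynomial A), 0]) i))
        = ![Polynomial.X * Polynomial.X, 0] := by
      funext i; fin_cases i <;> simp [Polynomial.expand_X, sq]
    rw [hv, h2]
  have h3 : aeval ![(X 0 : MvPolynomial (Fin 2) A), 0] F = 0 := by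
    have hc := comp_aeval_apply (Polynomial.aeval (X 0 : MvPolynomial (Fin 2) A))
      (f := ![(Polynomial.X : Polynomial A), 0]) F
    rw [hp0, map_zero] at hc
    have hv : (fun i => Polynomial.aeval (X 0 : MvPolynomial (Fin 2) A)
        ((![(Polynomial.X : Polynomial A), 0]) i)) = ![X 0, 0] := by
      funext i; fin_cases i <;> simp
    rw [hv] at hc
    exact hc.symm
  rw [h3, add_zero] at h1
  set q : Polynomial A := aeval ![(0 : Polynomial A), Polynomial.X] F with hqdef
  have hrep : F = Polynomial.aeval (X 1 : MvPolynomial (Fin 2) A) q := by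
    rw [hqdef, pe_of_aeval]; exact h1
  have hadd : Polynomial.aeval ((X 0 : MvPolynomial (Fin 2) A) + X 1) q
      = Polynomial.aeval (X 0 : MvPolynomial (Fin 2) A) q
        + Polynomial.aeval (X 1 : MvPolynomial (Fin 2) A) q := by
    rw [hqdef, pe_of_aeval, pe_of_aeval, pe_of_aeval]
    have h4 := congrArg (aeval (![0, X 0, 0, X 1] : Fin 4 → MvPolynomial (Fin 2) A)) hF
    rw [map_add, aeval_aeval, aeval_aeval, aeval_aeval] at h4
    simp only [map_add, map_mul, aeval_X, Matrix.cons_val_zero, Matrix.cons_val_one,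
      Matrix.head_cons, Matrix.cons_val_two, Matrix.tail_cons, Matrix.cons_val_three,
      zero_add, add_zero, mul_zero, zero_mul, map_zero] at h4
    conv_lhs at h4 => rw [h1, aeval_aeval]
    simp only [map_add, map_zero, aeval_X, Matrix.cons_val_zero, Matrix.cons_val_one,
      Matrix.head_cons] at h4
    exact h4
  refine ⟨q.natDegree + 1, fun r => q.coeff (2 ^ r), ?_, ?_⟩
  · intro r hr
    apply Polynomial.coeff_eq_zero_of_natDegree_lt
    have : r < 2 ^ r := Nat.lt_two_pow_self
    omega
  · have hform := additive_form q (additive_classify q hadd) (q.natDegree + 1)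
      (Nat.lt_succ_self _)
    rw [hrep]
    conv_lhs => rw [hform]
    rw [map_sum]
    refine Finset.sum_congr rfl fun r _ => ?_
    rw [map_mul, map_pow, Polynomial.aeval_C, Polynomial.aeval_X, algebraMap_eq]

omit [CharP A 2] in
lemma sum_extend {M : Type*} [AddCommMonoid M] {n₀ N : ℕ} (h : n₀ ≤ N) (g : ℕ → M)
    (hg : ∀ r, n₀ ≤ r → g r = 0) :
    ∑ r ∈ Finset.range n₀, g r = ∑ r ∈ Finset.range N, g r :=
  Finset.sum_subset (Finset.range_subset_range.mpr h)
    (fun x _ hx => hg x (by simpa using hx))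

lemma sum_sq_split {M : Type*} [AddCommMonoid M] (N : ℕ) (t : ℕ → ℕ → M) :
    ∑ r ∈ Finset.range N, ∑ s ∈ Finset.range N, t r s
      = (∑ r ∈ Finset.range N, t r r)
        + ∑ r ∈ Finset.range N, ∑ s ∈ Finset.range r, (t r s + t s r) := by
  induction N with
  | zero => simp
  | succ n ih =>
      rw [Finset.sum_range_succ (f := fun r => ∑ s ∈ Finset.range (n+1), t r s),
        Finset.sum_range_succ (f := fun r => t r r),
        Finset.sum_range_succ (f := fun r => ∑ s ∈ Finset.range r, (t r s + t s r)),
        Finset.sum_range_succ (f := fun s => t n s)]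
      have e : ∑ r ∈ Finset.range n, ∑ s ∈ Finset.range (n+1), t r s
          = (∑ r ∈ Finset.range n, ∑ s ∈ Finset.range n, t r s)
            + ∑ r ∈ Finset.range n, t r n := by
        rw [← Finset.sum_add_distrib]
        exact Finset.sum_congr rfl fun r _ => Finset.sum_range_succ _ _
      rw [e, ih, Finset.sum_add_distrib (f := fun s => t n s) (g := fun s => t s n)]
      abel

lemma additive_hom (N : ℕ) (c : ℕ → A) :
    aeval ![(X 0 : MvPolynomial (Fin 4) A) + X 2 + X 1 * X 3, X 1 + X 3]
        (∑ r ∈ Finset.range N, C (c r) * X 1 ^ 2 ^ r)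
      = aeval ![(X 0 : MvPolynomial (Fin 4) A), X 1]
          (∑ r ∈ Finset.range N, C (c r) * X 1 ^ 2 ^ r)
        + aeval ![(X 2 : MvPolynomial (Fin 4) A), X 3]
          (∑ r ∈ Finset.range N, C (c r) * X 1 ^ 2 ^ r) := by
  haveI : ExpChar (MvPolynomial (Fin 4) A) 2 := ExpChar.prime Nat.prime_two
  simp only [map_sum, map_mul, map_pow, aeval_C, aeval_X, Matrix.cons_val_zero,
    Matrix.cons_val_one, Matrix.head_cons, algebraMap_eq]
  rw [← Finset.sum_add_distrib]
  refine Finset.sum_congr rfl fun r _ => ?_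
  rw [add_pow_char_pow, mul_add]

omit [CharP A 2] in
lemma star_id (N : ℕ) (a : ℕ → A) :
    (∑ r ∈ Finset.range N, C (a r) ^ 2 * (X 1 ^ 2 ^ r * X 3 ^ 2 ^ r) : MvPolynomial (Fin 4) A)
      + ∑ r ∈ Finset.range N, ∑ s ∈ Finset.range r,
          C (a r) * C (a s) * (X 1 ^ 2 ^ r * X 3 ^ 2 ^ s + X 1 ^ 2 ^ s * X 3 ^ 2 ^ r)
    = ∑ r ∈ Finset.range N, ∑ s ∈ Finset.range N,
        (C (a r) * X 1 ^ 2 ^ r) * (C (a s) * X 3 ^ 2 ^ s) := by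
  rw [sum_sq_split]
  congr 1
  · exact Finset.sum_congr rfl fun r _ => by ring
  · exact Finset.sum_congr rfl fun r _ => Finset.sum_congr rfl fun s _ => by ring

lemma key_hom (N : ℕ) (a : ℕ → A) :
    aeval ![(X 0 : MvPolynomial (Fin 4) A) + X 2 + X 1 * X 3, X 1 + X 3]
        ((∑ r ∈ Finset.range N, C (a r ^ 2) * X 0 ^ 2 ^ r)
          + ∑ r ∈ Finset.range N, ∑ s ∈ Finset.range r,
              C (a r * a s) * X 1 ^ (2 ^ r + 2 ^ s))
      = aeval ![(X 0 : MvPolynomial (Fin 4) A), X 1]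
          ((∑ r ∈ Finset.range N, C (a r ^ 2) * X 0 ^ 2 ^ r)
            + ∑ r ∈ Finset.range N, ∑ s ∈ Finset.range r,
                C (a r * a s) * X 1 ^ (2 ^ r + 2 ^ s))
        + aeval ![(X 2 : MvPolynomial (Fin 4) A), X 3]
          ((∑ r ∈ Finset.range N, C (a r ^ 2) * X 0 ^ 2 ^ r)
            + ∑ r ∈ Finset.range N, ∑ s ∈ Finset.range r,
                C (a r * a s) * X 1 ^ (2 ^ r + 2 ^ s))
        + aeval ![(X 0 : MvPolynomial (Fin 4) A), X 1]
            (∑ r ∈ Finset.range N, C (a r) * X 1 ^ 2 ^ r)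
          * aeval ![(X 2 : MvPolynomial (Fin 4) A), X 3]
            (∑ r ∈ Finset.range N, C (a r) * X 1 ^ 2 ^ r) := by
  haveI : ExpChar (MvPolynomial (Fin 4) A) 2 := ExpChar.prime Nat.prime_two
  simp only [map_add, map_sum, map_mul, map_pow, aeval_C, aeval_X, Matrix.cons_val_zero,
    Matrix.cons_val_one, Matrix.head_cons, algebraMap_eq]
  rw [Finset.sum_mul_sum]
  have L1 : ∀ r ∈ Finset.range N, C (a r) ^ 2 * ((X 0 : MvPolynomial (Fin 4) A) + X 2 + X 1 * X 3) ^ 2 ^ r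
      = C (a r) ^ 2 * X 0 ^ 2 ^ r + C (a r) ^ 2 * X 2 ^ 2 ^ r
        + C (a r) ^ 2 * (X 1 ^ 2 ^ r * X 3 ^ 2 ^ r) := by
    intro r _
    rw [add_pow_char_pow, add_pow_char_pow, mul_pow]; ring
  have L2 : ∀ r ∈ Finset.range N,
      (∑ s ∈ Finset.range r, C (a r) * C (a s) * ((X 1 : MvPolynomial (Fin 4) A) + X 3) ^ (2 ^ r + 2 ^ s))
      = (∑ s ∈ Finset.range r, C (a r) * C (a s) * X 1 ^ (2 ^ r + 2 ^ s))
        + ((∑ s ∈ Finset.range r, C (a r) * C (a s) * X 3 ^ (2 ^ r + 2 ^ s))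
          + ∑ s ∈ Finset.range r, C (a r) * C (a s)
              * (X 1 ^ 2 ^ r * X 3 ^ 2 ^ s + X 1 ^ 2 ^ s * X 3 ^ 2 ^ r)) := by
    intro r _
    rw [← Finset.sum_add_distrib, ← Finset.sum_add_distrib]
    refine Finset.sum_congr rfl fun s _ => ?_
    rw [pow_add, add_pow_char_pow, add_pow_char_pow, pow_add, pow_add]
    ring
  rw [Finset.sum_congr rfl L1, Finset.sum_congr rfl L2]
  rw [Finset.sum_add_distrib, Finset.sum_add_distrib, Finset.sum_add_distrib,
    Finset.sum_add_distrib]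
  rw [← star_id N a]
  abel

end WittTwoAux

open WittTwoAux

/-- Let `p = 2`, `A` a perfect `𝔽_2`-algebra, and `G` the `A`-group
scheme with underlying scheme `G_a × G_a` and group law
`(t₁,u₁)+(t₂,u₂) = (t₁+t₂+u₁u₂, u₁+u₂)` (Witt vectors of length 2). A pair
`(f₀,f₁) ∈ A[T,U]²` (here `T = X 0`, `U = X 1` in `MvPolynomial (Fin 2) A`) defines a
group-scheme endomorphism of `G` if and only if there exist additive polynomials
`a(U) = Σ_r a_r U^{2^r}` and `b(U) = Σ_r b_r U^{2^r}` with `f₁(T,U) = a(U)` and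
`f₀(T,U) = Σ_r a_r² T^{2^r} + Σ_{r₁>r₂≥0} a_{r₁}a_{r₂} U^{2^{r₁}+2^{r₂}} + b(U)`. -/
theorem witt_length_two_endomorphisms
    {A : Type*} [CommRing A] [CharP A 2] [ExpChar A 2] [PerfectRing A 2]
    (f₀ f₁ : MvPolynomial (Fin 2) A) :
    -- the endomorphism equations in `A[T₁,U₁,T₂,U₂]` (variables `X 0, X 1, X 2, X 3`):
    ((MvPolynomial.aeval
          ![(MvPolynomial.X 0 + MvPolynomial.X 2 + MvPolynomial.X 1 * MvPolynomial.X 3 :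
              MvPolynomial (Fin 4) A), MvPolynomial.X 1 + MvPolynomial.X 3] f₀
        = MvPolynomial.aeval
            ![(MvPolynomial.X 0 : MvPolynomial (Fin 4) A), MvPolynomial.X 1] f₀
          + MvPolynomial.aeval
            ![(MvPolynomial.X 2 : MvPolynomial (Fin 4) A), MvPolynomial.X 3] f₀
          + MvPolynomial.aeval
              ![(MvPolynomial.X 0 : MvPolynomial (Fin 4) A), MvPolynomial.X 1] f₁
            * MvPolynomial.aeval
              ![(MvPolynomial.X 2 : MvPolynomial (Fin 4) A), MvPolynomial.X 3] f₁)
      ∧ (MvPolynomial.aeval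
          ![(MvPolynomial.X 0 + MvPolynomial.X 2 + MvPolynomial.X 1 * MvPolynomial.X 3 :
              MvPolynomial (Fin 4) A), MvPolynomial.X 1 + MvPolynomial.X 3] f₁
        = MvPolynomial.aeval
            ![(MvPolynomial.X 0 : MvPolynomial (Fin 4) A), MvPolynomial.X 1] f₁
          + MvPolynomial.aeval
            ![(MvPolynomial.X 2 : MvPolynomial (Fin 4) A), MvPolynomial.X 3] f₁))
    ↔ ∃ (N : ℕ) (a b : ℕ → A),
        f₁ = ∑ r ∈ Finset.range N, MvPolynomial.C (a r) * MvPolynomial.X 1 ^ 2 ^ r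
        ∧ f₀ = (∑ r ∈ Finset.range N,
              MvPolynomial.C (a r ^ 2) * MvPolynomial.X 0 ^ 2 ^ r)
            + (∑ r ∈ Finset.range N, ∑ s ∈ Finset.range r,
              MvPolynomial.C (a r * a s) * MvPolynomial.X 1 ^ (2 ^ r + 2 ^ s))
            + ∑ r ∈ Finset.range N,
              MvPolynomial.C (b r) * MvPolynomial.X 1 ^ 2 ^ r := by
  constructor
  · rintro ⟨hf0, hf1⟩
    obtain ⟨n₁, a, ha0, hfa⟩ := hom_shape f₁ hf1
    have hd : aeval ![(X 0 : MvPolynomial (Fin 4) A) + X 2 + X 1 * X 3, X 1 + X 3]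
          (f₀ + ((∑ r ∈ Finset.range n₁, C (a r ^ 2) * X 0 ^ 2 ^ r)
            + ∑ r ∈ Finset.range n₁, ∑ s ∈ Finset.range r,
                C (a r * a s) * X 1 ^ (2 ^ r + 2 ^ s)))
        = aeval ![(X 0 : MvPolynomial (Fin 4) A), X 1]
            (f₀ + ((∑ r ∈ Finset.range n₁, C (a r ^ 2) * X 0 ^ 2 ^ r)
              + ∑ r ∈ Finset.range n₁, ∑ s ∈ Finset.range r,
                  C (a r * a s) * X 1 ^ (2 ^ r + 2 ^ s)))
          + aeval ![(X 2 : MvPolynomial (Fin 4) A), X 3]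
            (f₀ + ((∑ r ∈ Finset.range n₁, C (a r ^ 2) * X 0 ^ 2 ^ r)
              + ∑ r ∈ Finset.range n₁, ∑ s ∈ Finset.range r,
                  C (a r * a s) * X 1 ^ (2 ^ r + 2 ^ s))) := by
      have hk := key_hom n₁ a
      rw [← hfa] at hk
      simp only [map_add] at hk ⊢
      linear_combination hf0 + hk + CharTwo.add_self_eq_zero
        (aeval ![(X 0 : MvPolynomial (Fin 4) A), X 1] f₁
          * aeval ![(X 2 : MvPolynomial (Fin 4) A), X 3] f₁)
    obtain ⟨n₂, b, hb0, hdb⟩ := hom_shape _ hd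
    refine ⟨max n₁ n₂, a, b, ?_, ?_⟩
    · rw [hfa]
      exact sum_extend (le_max_left _ _) _ (fun r hr => by simp [ha0 r hr])
    · have e1 : (∑ r ∈ Finset.range n₁, C (a r ^ 2) * (X 0 : MvPolynomial (Fin 2) A) ^ 2 ^ r)
          = ∑ r ∈ Finset.range (max n₁ n₂), C (a r ^ 2) * X 0 ^ 2 ^ r :=
        sum_extend (le_max_left _ _) _ (fun r hr => by simp [ha0 r hr])
      have e2 : (∑ r ∈ Finset.range n₁, ∑ s ∈ Finset.range r,
            C (a r * a s) * (X 1 : MvPolynomial (Fin 2) A) ^ (2 ^ r + 2 ^ s))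
          = ∑ r ∈ Finset.range (max n₁ n₂), ∑ s ∈ Finset.range r,
            C (a r * a s) * X 1 ^ (2 ^ r + 2 ^ s) :=
        sum_extend (le_max_left _ _) _ (fun r hr => by simp [ha0 r hr])
      have e3 : (∑ r ∈ Finset.range n₂, C (b r) * (X 1 : MvPolynomial (Fin 2) A) ^ 2 ^ r)
          = ∑ r ∈ Finset.range (max n₁ n₂), C (b r) * X 1 ^ 2 ^ r :=
        sum_extend (le_max_right _ _) _ (fun r hr => by simp [hb0 r hr])
      rw [← e1, ← e2, ← e3]
      linear_combination hdb - CharTwo.add_self_eq_zero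
        ((∑ r ∈ Finset.range n₁, C (a r ^ 2) * (X 0 : MvPolynomial (Fin 2) A) ^ 2 ^ r)
          + ∑ r ∈ Finset.range n₁, ∑ s ∈ Finset.range r,
              C (a r * a s) * X 1 ^ (2 ^ r + 2 ^ s))
  · rintro ⟨N, a, b, h1, h0⟩
    constructor
    · rw [h0, h1]
      have hk := key_hom N a
      have hb := additive_hom N b
      simp only [map_add] at hk hb ⊢
      linear_combination hk + hb
    · rw [h1]
      exact additive_hom N a
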